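/- For every 1 ≤ i ≤ 2n-1, det L_i ∈ I_Δ^{μ(i)}, where μ(i) = min(⌊i/2⌋, ⌊(2n-i)/2⌋) and I_Δ is the ideal of R generated by the differences y_{ij} − x_{ij} for 1 ≤ j < i ≤ n (with the convention I_Δ^0 = R). -/
import Mathlib


open MvPolynomial

/-- Index type for the variables `x_{rj}`, `y_{rj}` with `0 ≤ j < r < n` (0-indexed);
`false` tags an x-variable and `true` a y-variable. -/
def Vars (n : ℕ) : Type := {v : ℕ × ℕ // v.2 < v.1 ∧ v.1 < n} × Bool

instance (n : ℕ) : DecidableEq (Vars n) := by unfold Vars; infer_instance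

/-- The entry `x_{rj}` (`b = false`) or `y_{rj}` (`b = true`) (0-indexed), with the
conventions `x_{rr} = y_{rr} = 1` and `x_{rj} = y_{rj} = 0` for `r < j`. -/
noncomputable def ent (k : Type*) [Field k] (n r j : ℕ) (b : Bool) :
    MvPolynomial (Vars n) k :=
  if h : j < r ∧ r < n then X (⟨⟨(r, j), h.1, h.2⟩, b⟩ : Vars n)
  else if r = j then 1 else 0

/-- The entry of the `n × 2n` matrix `L` in row `r` and column `c` (0-indexed): the
columns alternate `x_{r0}, y_{r0}, x_{r1}, y_{r1}, …`. -/
noncomputable def Lent (k : Type*) [Field k] (n r c : ℕ) : MvPolynomial (Vars n) k :=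
  ent k n r (c / 2) (decide (c % 2 = 1))

/-- The size of the square matrix `L_i`, `1 ≤ i ≤ 2n-1`. -/
def sz (n i : ℕ) : ℕ := min i (2 * n - i)

/-- Row offset of `L_i` inside `L` (`n - i` for `i ≤ n` and `i - n` for `i ≥ n`). -/
def roff (n i : ℕ) : ℕ := (n - i) + (i - n)

/-- Column offset of `L_i` inside `L` (`0` for `i ≤ n` and `2(i-n)` for `i ≥ n`). -/
def coff (n i : ℕ) : ℕ := 2 * (i - n)

/-- The matrix `L_i`: for `1 ≤ i ≤ n` the `i × i` submatrix of `L` on the last `i`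
rows and the first `i` columns; for `n ≤ i ≤ 2n-1` the `(2n-i) × (2n-i)` submatrix
obtained from the first `i` columns of `L` by deleting the first `2(i-n)` columns
and the first `i - n` rows. -/
noncomputable def Lmat (k : Type*) [Field k] (n i : ℕ) :
    Matrix (Fin (sz n i)) (Fin (sz n i)) (MvPolynomial (Vars n) k) :=
  Matrix.of fun r c => Lent k n (roff n i + r.1) (coff n i + c.1)

/-- The determinant `det L_i`. -/
noncomputable def detL (k : Type*) [Field k] (n i : ℕ) : MvPolynomial (Vars n) k :=
  (Lmat k n i).det

/-- The ideal `I_Δ` of the diagonal of `U⁻ × U⁻`: the ideal generated by the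
differences `y_{rj} - x_{rj}` for `0 ≤ j < r < n`. -/
noncomputable def Idelta (k : Type*) [Field k] (n : ℕ) : Ideal (MvPolynomial (Vars n) k) :=
  Ideal.span (Set.range fun v : {v : ℕ × ℕ // v.2 < v.1 ∧ v.1 < n} =>
    (X (⟨v, true⟩ : Vars n) - X (⟨v, false⟩ : Vars n) : MvPolynomial (Vars n) k))


lemma prod_mem_pow' {R : Type*} [CommRing R] (I : Ideal R) {ι : Type*} [DecidableEq ι]
    (s : Finset ι) (f : ι → R) (h : ∀ i ∈ s, f i ∈ I) :
    ∏ i ∈ s, f i ∈ I ^ s.card := by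
  induction s using Finset.induction_on with
  | empty => simp
  | @insert a t ha ih =>
    rw [Finset.prod_insert ha, Finset.card_insert_of_notMem ha, pow_succ']
    exact Ideal.mul_mem_mul (h a (Finset.mem_insert_self a t))
      (ih fun i hi => h i (Finset.mem_insert_of_mem hi))

lemma card_odd_filter (s : ℕ) :
    (Finset.univ.filter (fun c : Fin s => c.1 % 2 = 1)).card = s / 2 := by
  rw [← Finset.card_range (s / 2)]
  refine Finset.card_bij' (fun c _ => c.1 / 2)
      (fun b hb => (⟨2 * b + 1, by simp only [Finset.mem_range] at hb; omega⟩ : Fin s))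
      ?hi ?hj ?li ?ri
  case hi =>
    intro a ha
    simp only [Finset.mem_filter] at ha
    simp only [Finset.mem_range]
    have := a.2
    omega
  case hj =>
    intro b hb
    simp only [Finset.mem_filter, Finset.mem_univ, true_and]
    omega
  case li =>
    intro a ha
    simp only [Finset.mem_filter] at ha
    apply Fin.ext
    simp only
    omega
  case ri =>
    intro b hb
    simp only [Finset.mem_range] at hb
    simp only
    omega

lemma det_mem_pow_of_pairs {R : Type*} [CommRing R] {s : ℕ}
    (M : Matrix (Fin s) (Fin s) R) (I : Ideal R)
    (h : ∀ (r c : Fin s), c.1 % 2 = 1 →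
      M r c - M r ⟨c.1 - 1, Nat.lt_of_le_of_lt (Nat.sub_le _ _) c.2⟩ ∈ I) :
    M.det ∈ I ^ (s / 2) := by
  classical
  set pred : Fin s → Fin s :=
    fun c => ⟨c.1 - 1, Nat.lt_of_le_of_lt (Nat.sub_le _ _) c.2⟩ with hpred
  have claim : ∀ T : Finset (Fin s), (∀ c ∈ T, c.1 % 2 = 1) →
      (Matrix.of fun r c => if c ∈ T then M r c - M r (pred c) else M r c).det = M.det := by
    intro T
    induction T using Finset.induction_on with
    | empty =>
      intro _
      have : (Matrix.of fun r c => if c ∈ (∅ : Finset (Fin s)) then M r c - M r (pred c) else M r c) = M := by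
        ext r c; simp
      rw [this]
    | @insert a t ha ih =>
      intro hodd
      have hodda : a.1 % 2 = 1 := hodd a (Finset.mem_insert_self a t)
      have hpa : pred a ∉ t := by
        intro hmem
        have := hodd (pred a) (Finset.mem_insert_of_mem hmem)
        simp only [hpred] at this
        omega
      have hane : a ≠ pred a := by
        intro he
        have : a.1 = a.1 - 1 := congrArg Fin.val he
        omega
      set A : Matrix (Fin s) (Fin s) R :=
        Matrix.of fun r c => if c ∈ t then M r c - M r (pred c) else M r c with hA
      have heq : (Matrix.of fun r c => if c ∈ insert a t then M r c - M r (pred c) else M r c)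
          = A.updateCol a (fun r => A r a + (-1 : R) • A r (pred a)) := by
        ext r c
        by_cases hc : c = a
        · subst hc
          simp [Matrix.updateCol_self, hA, ha, hpa, sub_eq_add_neg]
        · simp [Matrix.updateCol_ne hc, hA, Finset.mem_insert, hc]
      rw [heq, Matrix.det_updateCol_add_smul_self A hane]
      exact ih fun c hc => hodd c (Finset.mem_insert_of_mem hc)
  have hN := claim (Finset.univ.filter (fun c : Fin s => c.1 % 2 = 1))
    (fun c hc => (Finset.mem_filter.mp hc).2)
  rw [← hN, Matrix.det_apply]
  apply Ideal.sum_mem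
  intro σ _
  rw [Units.smul_def, zsmul_eq_mul]
  apply Ideal.mul_mem_left
  rw [← Finset.prod_filter_mul_prod_filter_not Finset.univ (fun c : Fin s => c.1 % 2 = 1)]
  apply Ideal.mul_mem_right
  rw [← card_odd_filter s]
  apply prod_mem_pow'
  intro c hc
  have hodd : c.1 % 2 = 1 := (Finset.mem_filter.mp hc).2
  simp only [Matrix.of_apply, hc, if_true]
  exact h (σ c) c hodd

/-- For every `1 ≤ i ≤ 2n-1`, `det L_i ∈ I_Δ^{μ(i)}` where
`μ(i) = min (⌊i/2⌋) (⌊(2n-i)/2⌋)`. -/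
theorem detL_mem_Idelta_pow {k : Type*} [Field k] (n : ℕ) (hn : 2 ≤ n)
    (i : ℕ) (hi1 : 1 ≤ i) (hi2 : i ≤ 2 * n - 1) :
    detL k n i ∈ Idelta k n ^ min (i / 2) ((2 * n - i) / 2) := by
  have hmu : min (i / 2) ((2 * n - i) / 2) = sz n i / 2 := by
    unfold sz; omega
  rw [hmu]
  unfold detL
  apply det_mem_pow_of_pairs
  intro r c hc
  have hcoff : coff n i % 2 = 0 := by unfold coff; omega
  show Lmat k n i r c - Lmat k n i r _ ∈ Idelta k n
  unfold Lmat Lent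
  simp only [Matrix.of_apply]
  have h1 : decide ((coff n i + c.1) % 2 = 1) = true := by
    simp only [decide_eq_true_eq]; omega
  have h2 : decide ((coff n i + (c.1 - 1)) % 2 = 1) = false := by
    simp only [decide_eq_false_iff_not]; omega
  have h3 : (coff n i + (c.1 - 1)) / 2 = (coff n i + c.1) / 2 := by omega
  rw [h1, h2, h3]
  set rr := roff n i + r.1 with hrr
  set j := (coff n i + c.1) / 2 with hj
  unfold ent
  by_cases hjr : j < rr ∧ rr < n
  · rw [dif_pos hjr, dif_pos hjr]
    unfold Idelta
    exact Ideal.subset_span ⟨⟨(rr, j), hjr.1, hjr.2⟩, rfl⟩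
  · rw [dif_neg hjr, dif_neg hjr, sub_self]
    exact zero_mem _
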